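/- Let (X_n)_{n≥1} be square-integrable real random variables on a common probability space such that sup_n E[X_n²] ≤ 1, E[X_n] → 0 as n → ∞, and for each fixed n, Cov(X_n, X_m) → 0 as m → ∞. Then there exists a strictly increasing sequence of indices (m_ℓ)_{ℓ≥1} such that (1/M)·Σ_{ℓ=1}^M X_{m_ℓ} → 0 almost surely as M → ∞. -/

import Mathlib

open MeasureTheory Filter

lemma helper_int_mul {Ω : Type*} [MeasurableSpace Ω] {P : Measure Ω} {f g : Ω → ℝ}
    (hf : MemLp f 2 P) (hg : MemLp g 2 P) : Integrable (fun ω => f ω * g ω) P := by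
  refine (hf.integrable_sq.add hg.integrable_sq).mono'
    (hf.aestronglyMeasurable.mul hg.aestronglyMeasurable) ?_
  filter_upwards with ω
  have h1 : ‖f ω * g ω‖ = |f ω| * |g ω| := by rw [Real.norm_eq_abs, abs_mul]
  rw [h1]
  show |f ω| * |g ω| ≤ f ω ^ 2 + g ω ^ 2
  nlinarith [sq_nonneg (|f ω| - |g ω|), sq_abs (f ω), sq_abs (g ω), abs_nonneg (f ω),
    abs_nonneg (g ω)]

lemma helper_ae_tendsto {Ω : Type*} [MeasurableSpace Ω] (P : Measure Ω) {g : ℕ → Ω → ℝ}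
    (hint : ∀ K, Integrable (g K) P) (hnn : ∀ K ω, 0 ≤ g K ω)
    (hs : Summable fun K => ∫ ω, g K ω ∂P) :
    ∀ᵐ ω ∂P, Tendsto (fun K => g K ω) atTop (nhds 0) := by
  have hmeas : ∀ K, AEMeasurable (fun ω => ENNReal.ofReal (g K ω)) P :=
    fun K => (hint K).aemeasurable.ennreal_ofReal
  have hlin : ∫⁻ ω, ∑' K, ENNReal.ofReal (g K ω) ∂P
      = ∑' K, ∫⁻ ω, ENNReal.ofReal (g K ω) ∂P := lintegral_tsum hmeas
  have heq : ∀ K, ∫⁻ ω, ENNReal.ofReal (g K ω) ∂P = ENNReal.ofReal (∫ ω, g K ω ∂P) :=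
    fun K => (ofReal_integral_eq_lintegral_ofReal (hint K) (ae_of_all _ (hnn K))).symm
  have htop : ∫⁻ ω, ∑' K, ENNReal.ofReal (g K ω) ∂P ≠ ⊤ := by
    rw [hlin]
    simp_rw [heq]
    rw [← ENNReal.ofReal_tsum_of_nonneg (fun K => integral_nonneg (hnn K)) hs]
    exact ENNReal.ofReal_ne_top
  have hae : ∀ᵐ ω ∂P, ∑' K, ENNReal.ofReal (g K ω) < ⊤ :=
    ae_lt_top' (AEMeasurable.ennreal_tsum hmeas) htop
  filter_upwards [hae] with ω hω
  have hsummable : Summable fun K => g K ω := by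
    have h2 := ENNReal.summable_toReal hω.ne
    have h3 : ∀ K, (ENNReal.ofReal (g K ω)).toReal = g K ω :=
      fun K => ENNReal.toReal_ofReal (hnn K ω)
    simpa [h3] using h2
  exact hsummable.tendsto_atTop_zero

theorem stmt17 {Ω : Type*} [MeasurableSpace Ω] (P : Measure Ω) [IsProbabilityMeasure P]
    (X : ℕ → Ω → ℝ) (hX : ∀ n, MemLp (X n) 2 P)
    (hbound : ∀ n, ∫ ω, (X n ω) ^ 2 ∂P ≤ 1)
    (hmean : Tendsto (fun n => ∫ ω, X n ω ∂P) atTop (nhds 0))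
    (hcov : ∀ n, Tendsto
      (fun m => ∫ ω, X n ω * X m ω ∂P - (∫ ω, X n ω ∂P) * ∫ ω, X m ω ∂P)
      atTop (nhds 0)) :
    ∃ m : ℕ → ℕ, StrictMono m ∧
      ∀ᵐ ω ∂P, Tendsto
        (fun M : ℕ => (M : ℝ)⁻¹ * ∑ ℓ ∈ Finset.range M, X (m ℓ) ω) atTop (nhds 0) := by
  classical
  set μf : ℕ → ℝ := fun n => ∫ ω, X n ω ∂P with hμf
  set cov : ℕ → ℕ → ℝ := fun n m' => ∫ ω, X n ω * X m' ω ∂P - μf n * μf m' with hcovdef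
  -- Step 1: recursive construction of the subsequence
  have key : ∀ j k : ℕ, ∃ N, k < N ∧ |μf N| ≤ (1/2)^j ∧ ∀ n ≤ k, |cov n N| ≤ (1/2)^j := by
    intro j k
    have hε : (0:ℝ) < (1/2)^j := by positivity
    have h1 : ∀ᶠ N in atTop, |μf N| ≤ (1/2)^j := by
      have := hmean.eventually (Metric.closedBall_mem_nhds (0:ℝ) hε)
      simpa [Real.dist_eq] using this
    have h2 : ∀ᶠ N in atTop, ∀ n ≤ k, |cov n N| ≤ (1/2)^j := by
      have hn : ∀ n, ∀ᶠ N in atTop, |cov n N| ≤ (1/2)^j := by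
        intro n
        have := (hcov n).eventually (Metric.closedBall_mem_nhds (0:ℝ) hε)
        simpa [Real.dist_eq, hcovdef, hμf] using this
      have := (Filter.eventually_all_finset (Finset.range (k+1))).mpr
        (fun n _ => hn n)
      filter_upwards [this] with N hN n hnk
      exact hN n (Finset.mem_range.mpr (Nat.lt_succ_of_le hnk))
    obtain ⟨N, hN⟩ := ((eventually_gt_atTop k).and (h1.and h2)).exists
    exact ⟨N, hN.1, hN.2.1, hN.2.2⟩
  choose f hf1 hf2 hf3 using key
  set m : ℕ → ℕ := fun j => Nat.rec (f 0 0) (fun j prev => f (j+1) prev) j with hm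
  have hmsucc : ∀ j, m (j+1) = f (j+1) (m j) := fun j => rfl
  have hmono : StrictMono m := strictMono_nat_of_lt_succ (fun j => by
    rw [hmsucc]; exact hf1 (j+1) (m j))
  have hμm : ∀ j, |μf (m j)| ≤ (1/2)^j := by
    intro j
    cases j with
    | zero => exact hf2 0 0
    | succ j => exact hf2 (j+1) (m j)
  have hcovm : ∀ i j, i < j → |cov (m i) (m j)| ≤ (1/2)^j := by
    intro i j hij
    obtain ⟨j', rfl⟩ : ∃ j', j = j'+1 :=
      ⟨j-1, (Nat.succ_pred_eq_of_pos (Nat.pos_of_ne_zero (by omega))).symm⟩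
    exact hf3 (j'+1) (m j') (m i) (hmono.monotone (Nat.lt_succ_iff.mp hij))
  refine ⟨m, hmono, ?_⟩
  -- Step 2: second moment bounds
  set Y : ℕ → Ω → ℝ := fun ℓ => X (m ℓ) with hYdef
  set S : ℕ → Ω → ℝ := fun M ω => ∑ ℓ ∈ Finset.range M, Y ℓ ω with hSdef
  have hint : ∀ i j, Integrable (fun ω => Y i ω * Y j ω) P :=
    fun i j => helper_int_mul (hX _) (hX _)
  have hintsq : ∀ ℓ : ℕ, Integrable (fun ω => Y ℓ ω ^ 2) P := fun ℓ => (hX _).integrable_sq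
  have hpowle : ∀ i : ℕ, ((1:ℝ)/2)^i ≤ 1 := fun i => pow_le_one₀ (by norm_num) (by norm_num)
  have hpownn : ∀ i : ℕ, (0:ℝ) ≤ (1/2)^i := fun i => by positivity
  have hentry : ∀ i j, ∫ ω, Y i ω * Y j ω ∂P
      ≤ (if i = j then 1 else 0) + ((1/2)^i + (1/2)^j) := by
    have main : ∀ i j, i < j → ∫ ω, Y i ω * Y j ω ∂P ≤ (1/2)^i + (1/2)^j := by
      intro i j hij
      have h1 := hcovm i j hij
      have h2 := hμm i
      have h3 := hμm j
      have he : ∫ ω, Y i ω * Y j ω ∂P = cov (m i) (m j) + μf (m i) * μf (m j) := by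
        simp [hcovdef]; rfl
      rw [he]
      have hprod : μf (m i) * μf (m j) ≤ (1/2)^i := by
        calc μf (m i) * μf (m j) ≤ |μf (m i) * μf (m j)| := le_abs_self _
          _ = |μf (m i)| * |μf (m j)| := abs_mul _ _
          _ ≤ (1/2)^i * (1/2)^j := mul_le_mul h2 h3 (abs_nonneg _) (hpownn i)
          _ ≤ (1/2)^i * 1 := by
              have := hpowle j
              have := hpownn i
              nlinarith
          _ = (1/2)^i := mul_one _
      have hcovle : cov (m i) (m j) ≤ (1/2)^j := (abs_le.mp h1).2
      linarith
    intro i j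
    rcases lt_trichotomy i j with h | h | h
    · rw [if_neg h.ne]
      linarith [main i j h]
    · subst h
      rw [if_pos rfl]
      have he : (fun ω => Y i ω * Y i ω) = fun ω => X (m i) ω ^ 2 := by
        funext ω; simp [hYdef]; ring
      rw [he]
      have := hbound (m i)
      have := hpownn i
      linarith
    · rw [if_neg h.ne']
      have hc : (fun ω => Y i ω * Y j ω) = fun ω => Y j ω * Y i ω := by
        funext ω; ring
      rw [hc]
      linarith [main j i h]
  have hS2 : ∀ M : ℕ, ∫ ω, (S M ω)^2 ∂P ≤ 5 * M := by
    intro M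
    have hexp : (fun ω => (S M ω)^2)
        = fun ω => ∑ i ∈ Finset.range M, ∑ j ∈ Finset.range M, Y i ω * Y j ω := by
      funext ω
      rw [hSdef]
      simp only []
      rw [sq, Finset.sum_mul_sum]
    calc ∫ ω, (S M ω)^2 ∂P
        = ∫ ω, ∑ i ∈ Finset.range M, ∑ j ∈ Finset.range M, Y i ω * Y j ω ∂P := by rw [hexp]
      _ = ∑ i ∈ Finset.range M, ∫ ω, ∑ j ∈ Finset.range M, Y i ω * Y j ω ∂P :=
          integral_finset_sum _ (fun i _ => integrable_finset_sum _ (fun j _ => hint i j))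
      _ = ∑ i ∈ Finset.range M, ∑ j ∈ Finset.range M, ∫ ω, Y i ω * Y j ω ∂P :=
          Finset.sum_congr rfl (fun i _ => integral_finset_sum _ (fun j _ => hint i j))
      _ ≤ ∑ i ∈ Finset.range M, ∑ j ∈ Finset.range M,
            ((if i = j then 1 else 0) + ((1/2)^i + (1/2)^j)) :=
          Finset.sum_le_sum (fun i _ => Finset.sum_le_sum (fun j _ => hentry i j))
      _ ≤ 5 * M := by
          have e1 : ∑ i ∈ Finset.range M, ∑ j ∈ Finset.range M,
              (if i = j then (1:ℝ) else 0) = M := by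
            have h0 : ∀ i ∈ Finset.range M,
                ∑ j ∈ Finset.range M, (if i = j then (1:ℝ) else 0) = 1 := by
              intro i hi
              rw [Finset.sum_ite_eq (Finset.range M) i (fun _ => (1:ℝ))]
              rw [if_pos hi]
            rw [Finset.sum_congr rfl h0]
            simp
          have e2 : ∑ i ∈ Finset.range M, ((1:ℝ)/2)^i ≤ 2 := by
            have := sum_geometric_two_le M
            simpa using this
          have e3 : ∑ i ∈ Finset.range M, ∑ j ∈ Finset.range M, (((1:ℝ)/2)^i + (1/2)^j)
              = (M : ℝ) * (∑ i ∈ Finset.range M, ((1:ℝ)/2)^i) * 2 := by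
            simp [Finset.sum_add_distrib, Finset.mul_sum, Finset.sum_comm]
            ring
          have split : ∑ i ∈ Finset.range M, ∑ j ∈ Finset.range M,
              ((if i = j then (1:ℝ) else 0) + ((1/2)^i + (1/2)^j))
              = (M:ℝ) + ∑ i ∈ Finset.range M, ∑ j ∈ Finset.range M,
                  (((1:ℝ)/2)^i + (1/2)^j) := by
            rw [← e1, ← Finset.sum_add_distrib]
            congr 1
            funext i
            rw [← Finset.sum_add_distrib]
          rw [split, e3]
          have hM : (0:ℝ) ≤ M := Nat.cast_nonneg M
          have hge : (0:ℝ) ≤ ∑ i ∈ Finset.range M, ((1:ℝ)/2)^i :=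
            Finset.sum_nonneg (fun i _ => hpownn i)
          nlinarith
  -- Step 3: the two sequences of nonnegative functions
  set f1 : ℕ → Ω → ℝ := fun K ω => ((((K:ℝ)+1)^2)⁻¹)^2 * (S ((K+1)^2) ω)^2 with hf1def
  set f2 : ℕ → Ω → ℝ := fun K ω => ((((K:ℝ)+1)^2)⁻¹)^2 *
      ((2*(K:ℝ)+3) * ∑ ℓ ∈ Finset.Ico ((K+1)^2) ((K+2)^2), Y ℓ ω ^ 2) with hf2def
  have hSsqint : ∀ n : ℕ, Integrable (fun ω => (S n ω)^2) P := by
    intro n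
    have hexp : (fun ω => (S n ω)^2)
        = fun ω => ∑ i ∈ Finset.range n, ∑ j ∈ Finset.range n, Y i ω * Y j ω := by
      funext ω
      rw [hSdef]
      simp only []
      rw [sq, Finset.sum_mul_sum]
    rw [hexp]
    exact integrable_finset_sum _ (fun i _ => integrable_finset_sum _ (fun j _ => hint i j))
  have hf1int : ∀ K, Integrable (f1 K) P := by
    intro K
    exact (hSsqint ((K+1)^2)).const_mul _
  have hf2int : ∀ K, Integrable (f2 K) P := by
    intro K
    exact ((integrable_finset_sum _ (fun ℓ _ => hintsq ℓ)).const_mul _).const_mul _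
  have hf1nn : ∀ K ω, 0 ≤ f1 K ω := by
    intro K ω; rw [hf1def]; positivity
  have hf2nn : ∀ K ω, 0 ≤ f2 K ω := by
    intro K ω
    rw [hf2def]
    have : (0:ℝ) ≤ ∑ ℓ ∈ Finset.Ico ((K+1)^2) ((K+2)^2), Y ℓ ω ^ 2 :=
      Finset.sum_nonneg (fun ℓ _ => sq_nonneg _)
    positivity
  have hcastpow : ∀ K : ℕ, (((K+1)^2 : ℕ) : ℝ) = ((K:ℝ)+1)^2 := by
    intro K; push_cast; ring
  have hf1intle : ∀ K, ∫ ω, f1 K ω ∂P ≤ 5 * (((K:ℝ)+1)^2)⁻¹ := by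
    intro K
    rw [hf1def]
    simp only []
    rw [integral_const_mul _ _]
    have h1 := hS2 ((K+1)^2)
    have hc : (0:ℝ) ≤ ((((K:ℝ)+1)^2)⁻¹)^2 := by positivity
    calc ((((K:ℝ)+1)^2)⁻¹)^2 * ∫ ω, (S ((K+1)^2) ω)^2 ∂P
        ≤ ((((K:ℝ)+1)^2)⁻¹)^2 * (5 * (((K+1)^2 : ℕ) : ℝ)) := by
          apply mul_le_mul_of_nonneg_left _ hc
          exact_mod_cast h1
      _ = 5 * (((K:ℝ)+1)^2)⁻¹ := by
          rw [hcastpow K]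
          have : ((K:ℝ)+1)^2 ≠ 0 := by positivity
          field_simp
  have hf2intle : ∀ K, ∫ ω, f2 K ω ∂P ≤ 9 * (((K:ℝ)+1)^2)⁻¹ := by
    intro K
    rw [hf2def]
    simp only []
    rw [integral_const_mul _ _, integral_const_mul _ _, integral_finset_sum _ (fun ℓ _ => hintsq ℓ)]
    have hsum : ∑ ℓ ∈ Finset.Ico ((K+1)^2) ((K+2)^2), ∫ ω, Y ℓ ω ^ 2 ∂P
        ≤ 2*(K:ℝ)+3 := by
      calc ∑ ℓ ∈ Finset.Ico ((K+1)^2) ((K+2)^2), ∫ ω, Y ℓ ω ^ 2 ∂P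
          ≤ ∑ _ℓ ∈ Finset.Ico ((K+1)^2) ((K+2)^2), (1:ℝ) :=
            Finset.sum_le_sum (fun ℓ _ => hbound (m ℓ))
        _ = ((Finset.Ico ((K+1)^2) ((K+2)^2)).card : ℝ) := by simp
        _ = 2*(K:ℝ)+3 := by
            rw [Nat.card_Ico]
            have h : (K+2)^2 - (K+1)^2 = 2*K+3 := by
              have e1 : (K+2)^2 = K*K+4*K+4 := by ring
              have e2 : (K+1)^2 = K*K+2*K+1 := by ring
              omega
            rw [h]
            push_cast
            ring
    have hcnn : (0:ℝ) ≤ ((((K:ℝ)+1)^2)⁻¹)^2 := by positivity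
    have h23 : (0:ℝ) ≤ 2*(K:ℝ)+3 := by positivity
    calc ((((K:ℝ)+1)^2)⁻¹)^2 * ((2*(K:ℝ)+3) *
          ∑ ℓ ∈ Finset.Ico ((K+1)^2) ((K+2)^2), ∫ ω, Y ℓ ω ^ 2 ∂P)
        ≤ ((((K:ℝ)+1)^2)⁻¹)^2 * ((2*(K:ℝ)+3) * (2*(K:ℝ)+3)) := by
          apply mul_le_mul_of_nonneg_left _ hcnn
          exact mul_le_mul_of_nonneg_left hsum h23
      _ ≤ ((((K:ℝ)+1)^2)⁻¹)^2 * (9 * ((K:ℝ)+1)^2) := by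
          apply mul_le_mul_of_nonneg_left _ hcnn
          nlinarith [Nat.cast_nonneg (α := ℝ) K]
      _ = 9 * (((K:ℝ)+1)^2)⁻¹ := by
          have : ((K:ℝ)+1)^2 ≠ 0 := by positivity
          field_simp
  have hsummable_base : Summable (fun K : ℕ => (((K:ℝ)+1)^2)⁻¹) := by
    have h0 : Summable (fun n : ℕ => 1 / (n:ℝ)^2) :=
      Real.summable_one_div_nat_pow.mpr one_lt_two
    have h1 := (_root_.summable_nat_add_iff (f := fun n : ℕ => 1 / (n:ℝ)^2) 1).mpr h0
    apply h1.congr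
    intro K
    push_cast
    rw [one_div]
  have hsum1 : Summable (fun K => ∫ ω, f1 K ω ∂P) :=
    Summable.of_nonneg_of_le (fun K => integral_nonneg (hf1nn K)) hf1intle
      (hsummable_base.mul_left 5)
  have hsum2 : Summable (fun K => ∫ ω, f2 K ω ∂P) :=
    Summable.of_nonneg_of_le (fun K => integral_nonneg (hf2nn K)) hf2intle
      (hsummable_base.mul_left 9)
  have hae1 := helper_ae_tendsto P hf1int hf1nn hsum1
  have hae2 := helper_ae_tendsto P hf2int hf2nn hsum2
  -- Step 4: pointwise squeeze
  filter_upwards [hae1, hae2] with ω h1 h2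
  have hs1 : Tendsto (fun K => Real.sqrt (f1 K ω)) atTop (nhds 0) := by
    have := (Real.continuous_sqrt.tendsto 0).comp h1
    simpa [Function.comp_def] using this
  have hs2 : Tendsto (fun K => Real.sqrt (f2 K ω)) atTop (nhds 0) := by
    have := (Real.continuous_sqrt.tendsto 0).comp h2
    simpa [Function.comp_def] using this
  have hG : Tendsto (fun K => Real.sqrt (f1 K ω) + Real.sqrt (f2 K ω)) atTop (nhds 0) := by
    simpa using hs1.add hs2
  have hsqrtT : Tendsto Nat.sqrt atTop atTop := by
    apply tendsto_atTop_atTop_of_monotone (fun a b hab => Nat.sqrt_le_sqrt hab)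
    intro b
    exact ⟨b*b, (Nat.sqrt_eq b).ge⟩
  have hcomp : Tendsto (fun M : ℕ => Real.sqrt (f1 (Nat.sqrt M - 1) ω)
      + Real.sqrt (f2 (Nat.sqrt M - 1) ω)) atTop (nhds 0) :=
    hG.comp ((tendsto_sub_atTop_nat 1).comp hsqrtT)
  refine squeeze_zero_norm' ?_ hcomp
  filter_upwards [eventually_ge_atTop 1] with M hM
  set K := Nat.sqrt M with hK
  have hK1 : 1 ≤ K := by
    have := Nat.sqrt_le_sqrt hM
    simpa [hK] using this
  have hKM : K^2 ≤ M := Nat.sqrt_le' M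
  have hMK : M < (K+1)^2 := Nat.lt_succ_sqrt' M
  have hKidx : K - 1 + 1 = K := Nat.succ_pred_eq_of_pos hK1
  have hKidx2 : K - 1 + 2 = K + 1 := by omega
  have hcast1 : ((K-1:ℕ):ℝ) + 1 = (K:ℝ) := by
    rw [Nat.cast_sub hK1]
    ring
  have hKpos : (0:ℝ) < (K:ℝ)^2 := by
    have : (0:ℝ) < (K:ℝ) := by exact_mod_cast hK1
    positivity
  have hMpos : (0:ℝ) < (M:ℝ) := by exact_mod_cast hM
  have hKM' : ((K:ℝ))^2 ≤ (M:ℝ) := by exact_mod_cast hKM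
  set a := S (K^2) ω with ha
  set b := S M ω - S (K^2) ω with hb
  set T := ∑ ℓ ∈ Finset.Ico (K^2) ((K+1)^2), Y ℓ ω ^ 2 with hT
  have hf1eq : f1 (K-1) ω = (((K:ℝ)^2)⁻¹)^2 * a^2 := by
    rw [hf1def]
    simp only []
    rw [hKidx, hcast1]
  have hf2eq : f2 (K-1) ω = (((K:ℝ)^2)⁻¹)^2 * ((2*(K:ℝ)+1) * T) := by
    rw [hf2def]
    simp only []
    rw [hKidx, hKidx2, ← hT]
    rw [Nat.cast_sub hK1]
    push_cast
    ring
  have t1 : |a| / (K:ℝ)^2 ≤ Real.sqrt (f1 (K-1) ω) := by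
    have he : f1 (K-1) ω = (a / (K:ℝ)^2)^2 := by
      rw [hf1eq]; field_simp
    rw [he, Real.sqrt_sq_eq_abs, abs_div, abs_of_pos hKpos]
  have hb2 : b^2 ≤ (2*(K:ℝ)+1) * T := by
    have hbe : b = ∑ ℓ ∈ Finset.Ico (K^2) M, Y ℓ ω := by
      rw [hb, hSdef]
      simp only []
      rw [Finset.sum_Ico_eq_sub _ hKM]
    have hcs : (∑ ℓ ∈ Finset.Ico (K^2) M, Y ℓ ω)^2
        ≤ ((Finset.Ico (K^2) M).card : ℝ) * ∑ ℓ ∈ Finset.Ico (K^2) M, Y ℓ ω ^ 2 :=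
      sq_sum_le_card_mul_sum_sq
    have hcard : ((Finset.Ico (K^2) M).card : ℝ) ≤ 2*(K:ℝ)+1 := by
      rw [Nat.card_Ico]
      have hle : M - K^2 ≤ 2*K+1 := by
        have e1 : (K+1)^2 = K*K+2*K+1 := by ring
        have e2 : K^2 = K*K := by ring
        omega
      calc ((M - K^2 : ℕ) : ℝ) ≤ ((2*K+1 : ℕ) : ℝ) := by exact_mod_cast hle
        _ = 2*(K:ℝ)+1 := by push_cast; ring
    have hsub : ∑ ℓ ∈ Finset.Ico (K^2) M, Y ℓ ω ^ 2 ≤ T := by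
      rw [hT]
      exact Finset.sum_le_sum_of_subset_of_nonneg
        (Finset.Ico_subset_Ico le_rfl hMK.le) (fun _ _ _ => sq_nonneg _)
    have hsnn : (0:ℝ) ≤ ∑ ℓ ∈ Finset.Ico (K^2) M, Y ℓ ω ^ 2 :=
      Finset.sum_nonneg (fun _ _ => sq_nonneg _)
    calc b^2 = (∑ ℓ ∈ Finset.Ico (K^2) M, Y ℓ ω)^2 := by rw [hbe]
      _ ≤ ((Finset.Ico (K^2) M).card : ℝ) * ∑ ℓ ∈ Finset.Ico (K^2) M, Y ℓ ω ^ 2 := hcs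
      _ ≤ (2*(K:ℝ)+1) * T := by
          apply mul_le_mul hcard hsub hsnn
          positivity
  have t2 : |b| / (K:ℝ)^2 ≤ Real.sqrt (f2 (K-1) ω) := by
    have he : (b / (K:ℝ)^2)^2 ≤ f2 (K-1) ω := by
      rw [hf2eq]
      have : (b / (K:ℝ)^2)^2 = (((K:ℝ)^2)⁻¹)^2 * b^2 := by
        rw [div_pow]
        rw [div_eq_mul_inv, ← inv_pow]
        ring
      rw [this]
      apply mul_le_mul_of_nonneg_left hb2
      positivity
    calc |b| / (K:ℝ)^2 = |b / (K:ℝ)^2| := by rw [abs_div, abs_of_pos hKpos]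
      _ = Real.sqrt ((b / (K:ℝ)^2)^2) := (Real.sqrt_sq_eq_abs _).symm
      _ ≤ Real.sqrt (f2 (K-1) ω) := Real.sqrt_le_sqrt he
  calc ‖(M:ℝ)⁻¹ * S M ω‖ = |S M ω| / (M:ℝ) := by
        rw [Real.norm_eq_abs, abs_mul, abs_inv, abs_of_pos hMpos]
        ring
    _ ≤ (|a| + |b|) / (M:ℝ) := by
        have hSab : S M ω = a + b := by rw [hb]; ring
        rw [hSab]
        gcongr
        exact abs_add_le a b
    _ ≤ (|a| + |b|) / ((K:ℝ)^2) := by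
        gcongr
    _ = |a|/(K:ℝ)^2 + |b|/(K:ℝ)^2 := add_div _ _ _
    _ ≤ Real.sqrt (f1 (K-1) ω) + Real.sqrt (f2 (K-1) ω) := add_le_add t1 t2
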